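/- No indefinite circulation: there exists δ > 0 such that (i) the closed δ-balls around distinct points of S are pairwise disjoint, and (ii) for every token index i ∈ {1,…,n} there exist s_i ∈ S and k_i ∈ ℕ such that z_i^k ∈ B_δ(s_i) for all k ≥ k_i. -/

import Mathlib

open scoped RealInnerProductSpace BigOperators Classical
open Filter Metric
open Topology

noncomputable section

/-- The hardmax attention (argmax) index set `C_i` for a token configuration `z`
(attention matrix `A = I`): the set of indices `j` maximizing `⟪z_i, z_j⟫`. -/
def attn {d n : ℕ} (z : Fin n → EuclideanSpace ℝ (Fin d)) (i : Fin n) : Finset (Fin n) :=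
  Finset.univ.filter fun j => (⟪z i, z j⟫ = ⨆ ℓ, ⟪z i, z ℓ⟫)

/-- The pure-attention hardmax transformer dynamics with step-size `α > 0` and `A = I`:
`z_i^{k+1} = z_i^k + (α/(1+α))·(1/|C_i^k|)·Σ_{j ∈ C_i^k} (z_j^k − z_i^k)`. -/
def IsDyn {d n : ℕ} (α : ℝ) (z : ℕ → Fin n → EuclideanSpace ℝ (Fin d)) : Prop :=
  ∀ k i, z (k + 1) i = z k i +
    (α / (1 + α)) • (((attn (z k) i).card : ℝ)⁻¹ • ∑ j ∈ attn (z k) i, (z k j - z k i))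

/-- The limiting set `K = ⋂ₖ co(Z^k)`, the intersection of the convex hulls of the token
configurations over all times. -/
def limitK {d n : ℕ} (z : ℕ → Fin n → EuclideanSpace ℝ (Fin d)) :
    Set (EuclideanSpace ℝ (Fin d)) :=
  ⋂ k, convexHull ℝ (Set.range (z k))

/-- The cluster set `S = { x ∈ K : max_{v ∈ V} ⟪v − x, x⟫ = 0 }`, where `V` is the set of
extreme points (vertices) of `K`; `max … = 0` is phrased as: `0` is the greatest element of
the set of values `⟪v − x, x⟫`, `v ∈ V`. -/
def clusterSet {d : ℕ} (K : Set (EuclideanSpace ℝ (Fin d))) :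
    Set (EuclideanSpace ℝ (Fin d)) :=
  {x ∈ K | IsGreatest ((fun v => ⟪v - x, x⟫) '' (Set.extremePoints ℝ K)) 0}

lemma aux_halfspace {d : ℕ} (x : EuclideanSpace ℝ (Fin d)) {s : Set (EuclideanSpace ℝ (Fin d))}
    {M : ℝ} (h : ∀ y ∈ s, ⟪x, y⟫ ≤ M) : ∀ y ∈ convexHull ℝ s, ⟪x, y⟫ ≤ M := by
  have hc : Convex ℝ {y : EuclideanSpace ℝ (Fin d) | ⟪x, y⟫ ≤ M} :=
    convex_halfSpace_le ⟨fun a b => inner_add_right x a b, fun c a => real_inner_smul_right x a c⟩ M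
  exact fun y hy => convexHull_min h hc hy

lemma aux_norm_step {d : ℕ} (c : ℝ) (x b : EuclideanSpace ℝ (Fin d)) :
    ‖x + c • (b - x)‖^2 = ‖x‖^2 + 2*c*(⟪x, b⟫ - ‖x‖^2) + ‖c • (b - x)‖^2 := by
  rw [norm_add_sq_real, real_inner_smul_right, inner_sub_right, real_inner_self_eq_norm_sq]
  ring

lemma aux_step {d n : ℕ} (zz : Fin n → EuclideanSpace ℝ (Fin d)) (i : Fin n) (α : ℝ) :
    ∃ b ∈ convexHull ℝ (Set.range zz),
      (zz i + (α / (1 + α)) • (((attn zz i).card : ℝ)⁻¹ • ∑ j ∈ attn zz i, (zz j - zz i))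
        = zz i + (α / (1 + α)) • (b - zz i)) ∧ ⟪zz i, b⟫ = ⨆ ℓ, ⟪zz i, zz ℓ⟫ := by
  haveI : Nonempty (Fin n) := ⟨i⟩
  set A := attn zz i with hA_def
  have hA : A.Nonempty := by
    obtain ⟨j, hj⟩ := Finite.exists_max (fun ℓ => ⟪zz i, zz ℓ⟫)
    refine ⟨j, ?_⟩
    rw [hA_def, attn, Finset.mem_filter]
    refine ⟨Finset.mem_univ _, le_antisymm
      (le_ciSup (f := fun ℓ => ⟪zz i, zz ℓ⟫) (Set.finite_range _).bddAbove j)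
      (ciSup_le fun ℓ => hj ℓ)⟩
  have hcard : (0:ℝ) < (A.card : ℝ) := by exact_mod_cast hA.card_pos
  set b : EuclideanSpace ℝ (Fin d) := (A.card : ℝ)⁻¹ • ∑ j ∈ A, zz j with hb_def
  have hsum : (A.card : ℝ)⁻¹ • ∑ j ∈ A, (zz j - zz i) = b - zz i := by
    rw [Finset.sum_sub_distrib, smul_sub, Finset.sum_const, hb_def]
    congr 1
    rw [← Nat.cast_smul_eq_nsmul ℝ, smul_smul, inv_mul_cancel₀ (ne_of_gt hcard), one_smul]
  refine ⟨b, ?_, by rw [hsum], ?_⟩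
  · have : b = A.centerMass (fun _ => (1:ℝ)) zz := by
      rw [Finset.centerMass]
      simp [hb_def]
    rw [this]
    exact A.centerMass_mem_convexHull (fun _ _ => zero_le_one)
      (by simpa using hcard) (fun j _ => Set.mem_range_self j)
  · have hmem : ∀ j ∈ A, ⟪zz i, zz j⟫ = ⨆ ℓ, ⟪zz i, zz ℓ⟫ := by
      intro j hj
      rw [hA_def, attn, Finset.mem_filter] at hj
      exact hj.2
    rw [hb_def, real_inner_smul_right, inner_sum, Finset.sum_congr rfl hmem, Finset.sum_const,
      nsmul_eq_mul, ← mul_assoc, inv_mul_cancel₀ (ne_of_gt hcard), one_mul]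

set_option maxHeartbeats 1600000 in
/-- No indefinite circulation: there is a `δ > 0` such that the closed `δ`-balls around
distinct points of `S` are pairwise disjoint, and every token eventually stays in the closed
`δ`-ball of a single point of `S`. -/
theorem no_indefinite_circulation {d n : ℕ} (hd : 0 < d) (hn : 0 < n) (α : ℝ) (hα : 0 < α)
    (z : ℕ → Fin n → EuclideanSpace ℝ (Fin d)) (hdyn : IsDyn α z)
    (hdist : ∀ i j : Fin n, i ≠ j → z 0 i ≠ z 0 j) (hnz : ∀ i, z 0 i ≠ 0) :
    ∃ δ : ℝ, 0 < δ ∧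
      (∀ s ∈ clusterSet (limitK z), ∀ s' ∈ clusterSet (limitK z), s ≠ s' →
        Disjoint (closedBall s δ) (closedBall s' δ)) ∧
      ∀ i : Fin n, ∃ s ∈ clusterSet (limitK z), ∃ k₀ : ℕ,
        ∀ k : ℕ, k₀ ≤ k → z k i ∈ closedBall s δ := by
  classical
  haveI : Nonempty (Fin n) := ⟨⟨0, hn⟩⟩
  set c : ℝ := α / (1 + α) with hc_def
  have hc0 : 0 < c := div_pos hα (by linarith)
  have hc1 : c ≤ 1 := by
    rw [hc_def, div_le_one (by linarith)]; linarith
  set Mf : ℕ → Fin n → ℝ := fun k i => ⨆ ℓ, ⟪z k i, z k ℓ⟫ with hMf_def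
  have hstep : ∀ k i, ∃ b ∈ convexHull ℝ (Set.range (z k)),
      z (k+1) i = z k i + c • (b - z k i) ∧ ⟪z k i, b⟫ = Mf k i := by
    intro k i
    obtain ⟨b, hb, heq, hin⟩ := aux_step (z k) i α
    exact ⟨b, hb, by rw [hdyn k i]; exact heq, hin⟩
  have hub : ∀ k i ℓ, ⟪z k i, z k ℓ⟫ ≤ Mf k i := fun k i ℓ =>
    le_ciSup (f := fun ℓ => ⟪z k i, z k ℓ⟫) (Set.finite_range _).bddAbove ℓ
  have hMi : ∀ k i, ‖z k i‖^2 ≤ Mf k i := fun k i => by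
    rw [← real_inner_self_eq_norm_sq]; exact hub k i i
  have hmem : ∀ k i, z k i ∈ convexHull ℝ (Set.range (z k)) :=
    fun k i => subset_convexHull ℝ _ (Set.mem_range_self i)
  have hnested : ∀ k, convexHull ℝ (Set.range (z (k+1))) ⊆ convexHull ℝ (Set.range (z k)) := by
    intro k
    apply convexHull_min _ (convex_convexHull ℝ _)
    rintro _ ⟨i, rfl⟩
    obtain ⟨b, hb, heq, -⟩ := hstep k i
    rw [heq]
    exact (convex_convexHull ℝ _).add_smul_sub_mem (hmem k i) hb ⟨hc0.le, hc1⟩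
  have hmono' : Antitone (fun k => convexHull ℝ (Set.range (z k))) :=
    antitone_nat_of_succ_le hnested
  have hmono : ∀ {k m : ℕ}, k ≤ m →
      convexHull ℝ (Set.range (z m)) ⊆ convexHull ℝ (Set.range (z k)) :=
    fun {k m} h => hmono' h
  have hcpt : ∀ k, IsCompact (convexHull ℝ (Set.range (z k))) :=
    fun k => (Set.finite_range (z k)).isCompact_convexHull ℝ
  obtain ⟨R, hR0, hR⟩ : ∃ R, 0 < R ∧ ∀ x ∈ convexHull ℝ (Set.range (z 0)), ‖x‖ ≤ R := by
    obtain ⟨R, hR⟩ := (hcpt 0).isBounded.exists_norm_le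
    exact ⟨max R 1, lt_of_lt_of_le one_pos (le_max_right _ _),
      fun x hx => (hR x hx).trans (le_max_left _ _)⟩
  have hzb : ∀ k i, ‖z k i‖ ≤ R := fun k i => hR _ (hmono (Nat.zero_le k) (hmem k i))
  have hDelta : ∀ k i, ‖z (k+1) i‖^2
      = ‖z k i‖^2 + 2*c*(Mf k i - ‖z k i‖^2) + ‖z (k+1) i - z k i‖^2 := by
    intro k i
    obtain ⟨b, -, heq, hin⟩ := hstep k i
    have h2 : z (k+1) i - z k i = c • (b - z k i) := by rw [heq]; abel
    rw [h2, heq, aux_norm_step c (z k i) b, hin]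
  have hquad : ∀ k i, 0 ≤ Mf k i - ‖z k i‖^2 := fun k i => sub_nonneg.2 (hMi k i)
  have hsum_e : ∀ i K, ∑ k ∈ Finset.range K, (Mf k i - ‖z k i‖^2) ≤ R^2/(2*c) := by
    intro i K
    have htel : ∑ k ∈ Finset.range K, (‖z (k+1) i‖^2 - ‖z k i‖^2) = ‖z K i‖^2 - ‖z 0 i‖^2 :=
      Finset.sum_range_sub (fun k => ‖z k i‖^2) K
    have h1 : ∑ k ∈ Finset.range K, (2*c)*(Mf k i - ‖z k i‖^2)
        ≤ ∑ k ∈ Finset.range K, (‖z (k+1) i‖^2 - ‖z k i‖^2) := by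
      apply Finset.sum_le_sum
      intro k _
      have := hDelta k i
      nlinarith [sq_nonneg ‖z (k+1) i - z k i‖]
    rw [← Finset.mul_sum] at h1
    have h2 : ‖z K i‖^2 - ‖z 0 i‖^2 ≤ R^2 := by
      have := hzb K i
      nlinarith [norm_nonneg (z 0 i), norm_nonneg (z K i), sq_nonneg ‖z 0 i‖]
    rw [le_div_iff₀ (by linarith : (0:ℝ) < 2*c)]
    calc (∑ k ∈ Finset.range K, (Mf k i - ‖z k i‖^2)) * (2*c)
        = (2*c) * ∑ k ∈ Finset.range K, (Mf k i - ‖z k i‖^2) := by ring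
      _ ≤ ‖z K i‖^2 - ‖z 0 i‖^2 := h1.trans_eq htel
      _ ≤ R^2 := h2
  have hsteptend : ∀ i, Tendsto (fun k => ‖z (k+1) i - z k i‖) atTop (𝓝 0) := by
    intro i
    have hDnn : ∀ k, 0 ≤ ‖z (k+1) i‖^2 - ‖z k i‖^2 := by
      intro k
      have := hDelta k i
      nlinarith [hquad k i, hc0, sq_nonneg ‖z (k+1) i - z k i‖]
    have hsummable : Summable (fun k => ‖z (k+1) i‖^2 - ‖z k i‖^2) := by
      apply summable_of_sum_range_le (c := R^2) hDnn
      intro K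
      rw [Finset.sum_range_sub (fun k => ‖z k i‖^2) K]
      have := hzb K i
      nlinarith [norm_nonneg (z 0 i), norm_nonneg (z K i), sq_nonneg ‖z 0 i‖]
    have hD0 : Tendsto (fun k => ‖z (k+1) i‖^2 - ‖z k i‖^2) atTop (𝓝 0) :=
      hsummable.tendsto_atTop_zero
    have hsq : Tendsto (fun k => ‖z (k+1) i - z k i‖^2) atTop (𝓝 0) := by
      apply squeeze_zero (fun k => sq_nonneg _) _ hD0
      intro k
      have := hDelta k i
      nlinarith [hquad k i, hc0]
    have h3 := hsq.sqrt
    rw [Real.sqrt_zero] at h3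
    convert h3 using 2 with k
    rw [Real.sqrt_sq (norm_nonneg _)]
  -- limit configuration w
  obtain ⟨w, hwmem, φ, hφ, hφtend⟩ :=
    (isCompact_univ_pi fun _ : Fin n => hcpt 0).tendsto_subseq
      (x := z) (fun k => by
        intro i _
        exact hmono (Nat.zero_le k) (hmem k i))
  have hwj : ∀ j, Tendsto (fun m => z (φ m) j) atTop (𝓝 (w j)) :=
    fun j => tendsto_pi_nhds.1 hφtend j
  set K := limitK z with hK_def
  have hKsub : ∀ k, K ⊆ convexHull ℝ (Set.range (z k)) := fun k => Set.iInter_subset _ k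
  have hwK : ∀ j, w j ∈ K := by
    intro j
    rw [hK_def, limitK, Set.mem_iInter]
    intro k
    apply (hcpt k).isClosed.mem_of_tendsto (hwj j)
    filter_upwards [eventually_ge_atTop k] with m hm
    exact hmono (hm.trans (hφ.le_apply)) (hmem (φ m) j)
  have hKconv : Convex ℝ K := convex_iInter fun k => convex_convexHull ℝ _
  have hKcl : IsClosed K := isClosed_iInter fun k => (hcpt k).isClosed
  have hKcpt : IsCompact K := (hcpt 0).of_isClosed_subset hKcl (hKsub 0)
  have hKne : K.Nonempty := ⟨w ⟨0, hn⟩, hwK _⟩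
  have hKeq : K = convexHull ℝ (Set.range w) := by
    refine le_antisymm ?_ (convexHull_min (by rintro _ ⟨j, rfl⟩; exact hwK j) hKconv)
    intro x hx
    by_contra hxw
    obtain ⟨f, u, hfu, hub'⟩ := geometric_hahn_banach_point_closed
      (convex_convexHull ℝ _) ((Set.finite_range w).isCompact_convexHull ℝ).isClosed hxw
    have hev : ∀ᶠ m in atTop, ∀ j, u < f (z (φ m) j) := by
      rw [eventually_all]
      intro j
      have hfw : u < f (w j) := hub' _ (subset_convexHull ℝ _ (Set.mem_range_self j))
      exact ((f.continuous.tendsto _).comp (hwj j)).eventually_const_lt hfw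
    obtain ⟨m, hm⟩ := hev.exists
    have hhs : Convex ℝ {y : EuclideanSpace ℝ (Fin d) | u ≤ f y} :=
      convex_halfSpace_ge ⟨f.map_add, f.map_smul⟩ u
    have hxhs : x ∈ {y : EuclideanSpace ℝ (Fin d) | u ≤ f y} := by
      apply convexHull_min _ hhs (hKsub (φ m) hx)
      rintro _ ⟨j, rfl⟩
      exact (hm j).le
    exact absurd hfu (not_lt.2 hxhs)
  -- the function g
  have hNE : (Finset.univ : Finset (Fin n)).Nonempty := Finset.univ_nonempty
  set g : EuclideanSpace ℝ (Fin d) → ℝ :=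
    fun x => (Finset.univ.sup' hNE fun j => ⟪x, w j⟫) - ‖x‖^2 with hg_def
  have hgcont : Continuous g := by
    have h1 : Continuous fun x : EuclideanSpace ℝ (Fin d) =>
        Finset.univ.sup' hNE fun j => ⟪x, w j⟫ := by
      rw [continuous_iff_continuousAt]
      intro x
      exact Filter.Tendsto.finset_sup'_nhds_apply hNE
        (fun j _ => (continuous_id.inner continuous_const).continuousAt)
    exact h1.sub ((continuous_norm).pow 2)
  have hinnle : ∀ (x : EuclideanSpace ℝ (Fin d)), ∀ y ∈ K,
      ⟪x, y⟫ ≤ Finset.univ.sup' hNE fun j => ⟪x, w j⟫ := by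
    intro x y hy
    refine aux_halfspace x ?_ y (hKeq ▸ hy)
    rintro _ ⟨j, rfl⟩
    exact Finset.le_sup' (f := fun j => ⟪x, w j⟫) (Finset.mem_univ j)
  have hg0 : ∀ x ∈ K, 0 ≤ g x := by
    intro x hx
    have h1 := hinnle x x hx
    rw [real_inner_self_eq_norm_sq] at h1
    simpa [hg_def] using h1
  have hgS : ∀ x ∈ K, g x = 0 → x ∈ clusterSet K := by
    intro x hx hgx
    have hsup : (Finset.univ.sup' hNE fun j => ⟪x, w j⟫) = ‖x‖^2 := by
      have h1 : (Finset.univ.sup' hNE fun j => ⟪x, w j⟫) - ‖x‖^2 = 0 := hgx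
      linarith
    have hbK : ∀ y ∈ K, ⟪x, y⟫ ≤ ‖x‖^2 := fun y hy => hsup ▸ hinnle x y hy
    refine ⟨hx, ?_, ?_⟩
    · set F := {y ∈ K | ∀ y' ∈ K, (innerSL ℝ x) y' ≤ innerSL ℝ x y} with hF_def
      have hFexp : IsExposed ℝ K F := fun _ => ⟨innerSL ℝ x, rfl⟩
      have hFne : F.Nonempty := by
        obtain ⟨v, hvK, hvmax⟩ := hKcpt.exists_isMaxOn hKne
          ((innerSL ℝ x).continuous.continuousOn)
        exact ⟨v, hvK, fun y' hy' => isMaxOn_iff.1 hvmax y' hy'⟩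
      have hFcl : IsClosed F := hFexp.isClosed hKcl
      have hFcpt : IsCompact F := hKcpt.of_isClosed_subset hFcl (Set.sep_subset _ _)
      obtain ⟨v, hv⟩ := hFcpt.extremePoints_nonempty hFne
      have hvext : v ∈ Set.extremePoints ℝ K :=
        (hFexp.isExtreme).extremePoints_subset_extremePoints hv
      have hvF : v ∈ F := extremePoints_subset hv
      have hvval : ⟪x, v⟫ = ‖x‖^2 := by
        have h1 : ⟪x, v⟫ ≤ ‖x‖^2 := hbK v hvF.1
        have h2 : ‖x‖^2 ≤ ⟪x, v⟫ := by
          have h3 := hvF.2 x hx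
          simp only [innerSL_apply_apply] at h3
          rwa [real_inner_self_eq_norm_sq] at h3
        linarith
      refine ⟨v, hvext, ?_⟩
      show ⟪v - x, x⟫ = 0
      rw [inner_sub_left]
      have hc' : ⟪v, x⟫ = ⟪x, v⟫ := real_inner_comm x v
      have hself : ⟪x, x⟫ = ‖x‖^2 := real_inner_self_eq_norm_sq x
      linarith
    · rintro _ ⟨v, hvext, rfl⟩
      have h1 : ⟪x, v⟫ ≤ ‖x‖^2 := hbK v (extremePoints_subset hvext)
      show ⟪v - x, x⟫ ≤ 0
      rw [inner_sub_left]
      have hc' : ⟪v, x⟫ = ⟪x, v⟫ := real_inner_comm x v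
      have hself : ⟪x, x⟫ = ‖x‖^2 := real_inner_self_eq_norm_sq x
      linarith
  have hSg : ∀ x ∈ clusterSet K, g x = 0 := by
    intro x hx
    obtain ⟨hxK, hIG⟩ := hx
    have hub2 : ∀ v ∈ Set.extremePoints ℝ K, ⟪x, v⟫ ≤ ‖x‖^2 := by
      intro v hv
      have h1 : ⟪v - x, x⟫ ≤ 0 := hIG.2 (Set.mem_image_of_mem _ hv)
      rw [inner_sub_left] at h1
      have hc' : ⟪v, x⟫ = ⟪x, v⟫ := real_inner_comm x v
      have hself : ⟪x, x⟫ = ‖x‖^2 := real_inner_self_eq_norm_sq x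
      linarith
    have hhs : IsClosed {y : EuclideanSpace ℝ (Fin d) | ⟪x, y⟫ ≤ ‖x‖^2} :=
      isClosed_le (Continuous.inner continuous_const continuous_id) continuous_const
    have hclos := closure_convexHull_extremePoints hKcpt hKconv
    have hwb : ∀ j, ⟪x, w j⟫ ≤ ‖x‖^2 := by
      intro j
      have hwj' : w j ∈ closure (convexHull ℝ (Set.extremePoints ℝ K)) := by
        rw [hclos]; exact hwK j
      have hsub : closure (convexHull ℝ (Set.extremePoints ℝ K))
          ⊆ {y : EuclideanSpace ℝ (Fin d) | ⟪x, y⟫ ≤ ‖x‖^2} := by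
        apply closure_minimal _ hhs
        exact fun y hy => aux_halfspace x hub2 y hy
      exact hsub hwj'
    have h1 : (Finset.univ.sup' hNE fun j => ⟪x, w j⟫) ≤ ‖x‖^2 :=
      Finset.sup'_le _ _ fun j _ => hwb j
    have h2 := hg0 x hxK
    rw [hg_def] at h2 ⊢
    simp only at h2 ⊢
    linarith
  set S := clusterSet K with hS_def
  have hSfin : S.Finite := by
    set W : Finset (EuclideanSpace ℝ (Fin d)) := Finset.univ.image w with hW_def
    have hrange : Set.range w = (W : Set (EuclideanSpace ℝ (Fin d))) := by
      rw [hW_def, Finset.coe_image, Finset.coe_univ, Set.image_univ]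
    set T : EuclideanSpace ℝ (Fin d) → Finset (EuclideanSpace ℝ (Fin d)) :=
      fun x => W.filter fun v => ⟪x, v⟫ = ‖x‖^2 with hT_def
    have hrep : ∀ x ∈ S, ∃ wt : EuclideanSpace ℝ (Fin d) → ℝ,
        (∀ v ∈ W, 0 ≤ wt v) ∧ (∑ v ∈ T x, wt v = 1) ∧ (∑ v ∈ T x, wt v • v = x) := by
      intro x hxS
      have hxK : x ∈ K := hxS.1
      have hgx : g x = 0 := hSg x hxS
      have hsup : (Finset.univ.sup' hNE fun j => ⟪x, w j⟫) = ‖x‖^2 := by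
        have h1 : (Finset.univ.sup' hNE fun j => ⟪x, w j⟫) - ‖x‖^2 = 0 := hgx
        linarith
      have hbW : ∀ v ∈ W, ⟪x, v⟫ ≤ ‖x‖^2 := by
        intro v hv
        rw [hW_def, Finset.mem_image] at hv
        obtain ⟨j, -, rfl⟩ := hv
        exact hsup ▸ Finset.le_sup' (f := fun j => ⟪x, w j⟫) (Finset.mem_univ j)
      have hxW : x ∈ convexHull ℝ (W : Set (EuclideanSpace ℝ (Fin d))) := by
        rw [← hrange, ← hKeq]; exact hxK
      obtain ⟨wt, hwt0, hwt1, hwtsum⟩ := Finset.mem_convexHull'.1 hxW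
      have hzero : ∀ v ∈ W, v ∉ T x → wt v = 0 := by
        intro v hvW hvT
        by_contra hne
        have hlt : ⟪x, v⟫ < ‖x‖^2 := by
          rcases lt_or_eq_of_le (hbW v hvW) with h | h
          · exact h
          · exact absurd (by rw [hT_def, Finset.mem_filter]; exact ⟨hvW, h⟩ :
              v ∈ T x) hvT
        have hsum0 : ∑ v ∈ W, wt v * (‖x‖^2 - ⟪x, v⟫) = 0 := by
          have hx1 : ∑ v ∈ W, wt v * ⟪x, v⟫ = ‖x‖^2 := by
            have h5 : ⟪x, ∑ v ∈ W, wt v • v⟫ = ‖x‖^2 := by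
              rw [hwtsum, real_inner_self_eq_norm_sq]
            rw [inner_sum] at h5
            rw [← h5]
            apply Finset.sum_congr rfl
            intro v _
            rw [real_inner_smul_right]
          have h6 : ∑ v ∈ W, wt v * (‖x‖^2 - ⟪x, v⟫)
              = (∑ v ∈ W, wt v) * ‖x‖^2 - ∑ v ∈ W, wt v * ⟪x, v⟫ := by
            rw [Finset.sum_mul, ← Finset.sum_sub_distrib]
            apply Finset.sum_congr rfl
            intro v _; ring
          rw [h6, hwt1, hx1]; ring
        have heach := (Finset.sum_eq_zero_iff_of_nonneg
          (fun v hv => mul_nonneg (hwt0 v hv) (sub_nonneg.2 (hbW v hv)))).1 hsum0 v hvW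
        exact (mul_ne_zero hne (by linarith : ‖x‖^2 - ⟪x, v⟫ ≠ 0)) heach
      refine ⟨wt, hwt0, ?_, ?_⟩
      · rw [Finset.sum_subset (Finset.filter_subset _ _) hzero]; exact hwt1
      · rw [Finset.sum_subset (Finset.filter_subset _ _)
          (fun v hv hvT => by rw [hzero v hv hvT, zero_smul])]
        exact hwtsum
    have hinj : Set.InjOn T S := by
      intro x hxS y hyS hTxy
      obtain ⟨wx, hwx0, hwx1, hwxsum⟩ := hrep x hxS
      obtain ⟨wy, hwy0, hwy1, hwysum⟩ := hrep y hyS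
      have hyx : ⟪y, x⟫ = ‖y‖^2 := by
        have h5 : ⟪y, ∑ v ∈ T x, wx v • v⟫ = ‖y‖^2 := by
          rw [inner_sum]
          have h6 : ∀ v ∈ T x, ⟪y, wx v • v⟫ = wx v * ‖y‖^2 := by
            intro v hv
            rw [hTxy] at hv
            rw [hT_def, Finset.mem_filter] at hv
            rw [real_inner_smul_right, hv.2]
          rw [Finset.sum_congr rfl h6, ← Finset.sum_mul, hwx1, one_mul]
        rwa [hwxsum] at h5
      have hxy : ⟪x, y⟫ = ‖x‖^2 := by
        have h5 : ⟪x, ∑ v ∈ T y, wy v • v⟫ = ‖x‖^2 := by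
          rw [inner_sum]
          have h6 : ∀ v ∈ T y, ⟪x, wy v • v⟫ = wy v * ‖x‖^2 := by
            intro v hv
            rw [← hTxy] at hv
            rw [hT_def, Finset.mem_filter] at hv
            rw [real_inner_smul_right, hv.2]
          rw [Finset.sum_congr rfl h6, ← Finset.sum_mul, hwy1, one_mul]
        rwa [hwysum] at h5
      have hnorm : ‖x - y‖^2 = 0 := by
        rw [norm_sub_sq_real]
        have hc' : ⟪y, x⟫ = ⟪x, y⟫ := real_inner_comm x y
        linarith [hxy, hyx]
      exact sub_eq_zero.1 (norm_eq_zero.1 (sq_eq_zero_iff.1 hnorm))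
    have himfin : (T '' S).Finite := by
      apply Set.Finite.subset (W.powerset : Finset (Finset (EuclideanSpace ℝ (Fin d)))).finite_toSet
      rintro _ ⟨x, -, rfl⟩
      rw [Finset.mem_coe, Finset.mem_powerset]
      exact Finset.filter_subset _ _
    exact Set.Finite.of_finite_image himfin hinj
  have hSne : S.Nonempty := by
    obtain ⟨x, hxK, hxmax⟩ := hKcpt.exists_isMaxOn hKne continuous_norm.continuousOn
    refine ⟨x, hgS x hxK ?_⟩
    have h1 : ∀ j, ⟪x, w j⟫ ≤ ‖x‖^2 := by
      intro j
      have h2 : ‖w j‖ ≤ ‖x‖ := isMaxOn_iff.1 hxmax (w j) (hwK j)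
      have h3 := real_inner_le_norm x (w j)
      nlinarith [norm_nonneg x]
    have hle : (Finset.univ.sup' hNE fun j => ⟪x, w j⟫) ≤ ‖x‖^2 :=
      Finset.sup'_le _ _ fun j _ => h1 j
    have h4 := hg0 x hxK
    rw [hg_def] at h4 ⊢
    simp only at h4 ⊢
    linarith
  obtain ⟨δ, hδ0, hδsep⟩ : ∃ δ : ℝ, 0 < δ ∧ ∀ s ∈ S, ∀ s' ∈ S, s ≠ s' → 3*δ ≤ dist s s' := by
    set P := (hSfin.toFinset ×ˢ hSfin.toFinset).filter (fun p => p.1 ≠ p.2) with hP_def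
    by_cases hP : P.Nonempty
    · set m := P.inf' hP (fun p => dist p.1 p.2) with hm_def
      have hm0 : 0 < m := by
        rw [hm_def, Finset.lt_inf'_iff]
        intro p hp
        rw [hP_def, Finset.mem_filter] at hp
        exact dist_pos.2 hp.2
      refine ⟨m/3, by linarith, ?_⟩
      intro s hs s' hs' hne
      have hmem' : (s, s') ∈ P := by
        rw [hP_def, Finset.mem_filter, Finset.mem_product]
        exact ⟨⟨hSfin.mem_toFinset.2 hs, hSfin.mem_toFinset.2 hs'⟩, hne⟩
      have h7 := Finset.inf'_le (fun p => dist p.1 p.2) hmem'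
      calc 3*(m/3) = m := by ring
        _ ≤ dist s s' := h7
    · refine ⟨1, one_pos, ?_⟩
      intro s hs s' hs' hne
      exact absurd ⟨(s, s'), by
        rw [hP_def, Finset.mem_filter, Finset.mem_product]
        exact ⟨⟨hSfin.mem_toFinset.2 hs, hSfin.mem_toFinset.2 hs'⟩, hne⟩⟩ hP
  obtain ⟨ρ, hρ0, η, hη0, hF7⟩ : ∃ ρ > 0, ∃ η > 0, ∀ x : EuclideanSpace ℝ (Fin d),
      infDist x K ≤ ρ → δ ≤ infDist x S → η ≤ g x := by
    have hU : IsOpen ({x : EuclideanSpace ℝ (Fin d) | 0 < g x} ∪ {x | infDist x S < δ}) :=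
      (isOpen_lt continuous_const hgcont).union
        (isOpen_lt (continuous_infDist_pt S) continuous_const)
    have hKU : K ⊆ {x : EuclideanSpace ℝ (Fin d) | 0 < g x} ∪ {x | infDist x S < δ} := by
      intro x hx
      rcases (hg0 x hx).lt_or_eq with h | h
      · exact Or.inl h
      · have hxS : x ∈ S := hgS x hx h.symm
        exact Or.inr (by
          simp only [Set.mem_setOf_eq]
          rw [infDist_zero_of_mem hxS]
          exact hδ0)
    obtain ⟨ρ', hρ'0, hρ'sub⟩ := hKcpt.exists_thickening_subset_open hU hKU
    have hρ2 : (0:ℝ) < ρ'/2 := by linarith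
    set T2 : Set (EuclideanSpace ℝ (Fin d)) :=
      {x | infDist x K ≤ ρ'/2} ∩ {x | δ ≤ infDist x S} with hT2_def
    have hT2cl : IsClosed T2 := (isClosed_le (continuous_infDist_pt K) continuous_const).inter
      (isClosed_le continuous_const (continuous_infDist_pt S))
    have hT2bd : Bornology.IsBounded T2 := by
      apply (hKcpt.isBounded.thickening (δ := ρ'/2 + 1)).subset
      intro x hx
      rw [mem_thickening_iff_infDist_lt hKne]
      calc infDist x K ≤ ρ'/2 := hx.1
        _ < ρ'/2 + 1 := by linarith
    have hT2cpt : IsCompact T2 := isCompact_of_isClosed_isBounded hT2cl hT2bd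
    by_cases hT2ne : T2.Nonempty
    · obtain ⟨x₀, hx₀T, hx₀min⟩ := hT2cpt.exists_isMinOn hT2ne hgcont.continuousOn
      have hgx₀ : 0 < g x₀ := by
        have hx₀U : x₀ ∈ thickening ρ' K := by
          rw [mem_thickening_iff_infDist_lt hKne]
          calc infDist x₀ K ≤ ρ'/2 := hx₀T.1
            _ < ρ' := by linarith
        rcases hρ'sub hx₀U with h | h
        · exact h
        · have h' : infDist x₀ S < δ := h
          exact absurd hx₀T.2 (not_le.2 h')
      exact ⟨ρ'/2, hρ2, g x₀, hgx₀, fun x h1 h2 => isMinOn_iff.1 hx₀min x ⟨h1, h2⟩⟩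
    · exact ⟨ρ'/2, hρ2, 1, one_pos, fun x h1 h2 =>
        absurd (⟨h1, h2⟩ : x ∈ T2) (fun hxT2 => hT2ne ⟨x, hxT2⟩)⟩
  have hKapprox : ∀ ε : ℝ, 0 < ε → ∃ k₀, ∀ k, k₀ ≤ k → ∀ i, infDist (z k i) K < ε := by
    intro ε hε
    have hex : ∃ k₀, convexHull ℝ (Set.range (z k₀)) ⊆ thickening ε K := by
      by_contra hno
      push_neg at hno
      have hne' : ∀ k, (convexHull ℝ (Set.range (z k)) \ thickening ε K).Nonempty := by
        intro k
        obtain ⟨x, hx1, hx2⟩ := Set.not_subset.1 (hno k)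
        exact ⟨x, hx1, hx2⟩
      have hdir : Directed (· ⊇ ·) (fun k => convexHull ℝ (Set.range (z k)) \ thickening ε K) := by
        intro k m
        exact ⟨max k m, Set.diff_subset_diff_left (hmono (le_max_left k m)),
          Set.diff_subset_diff_left (hmono (le_max_right k m))⟩
      have hcl : ∀ k, IsClosed (convexHull ℝ (Set.range (z k)) \ thickening ε K) :=
        fun k => (hcpt k).isClosed.sdiff isOpen_thickening
      have hcc : ∀ k, IsCompact (convexHull ℝ (Set.range (z k)) \ thickening ε K) :=
        fun k => (hcpt k).of_isClosed_subset (hcl k) Set.diff_subset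
      obtain ⟨x, hx⟩ := IsCompact.nonempty_iInter_of_directed_nonempty_isCompact_isClosed
        _ hdir hne' hcc hcl
      rw [Set.mem_iInter] at hx
      have hxK : x ∈ K := by
        rw [hK_def, limitK, Set.mem_iInter]
        exact fun k => (hx k).1
      exact (hx 0).2 (self_subset_thickening hε K hxK)
    obtain ⟨k₀, hk₀⟩ := hex
    refine ⟨k₀, fun k hk i => ?_⟩
    have h8 : z k i ∈ thickening ε K := hk₀ (hmono hk (hmem k i))
    exact (mem_thickening_iff_infDist_lt hKne).1 h8
  refine ⟨δ, hδ0, ?_, ?_⟩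
  · intro s hs s' hs' hne
    exact closedBall_disjoint_closedBall (by linarith [hδsep s hs s' hs' hne])
  · intro i
    have hge : ∀ k, g (z k i) ≤ Mf k i - ‖z k i‖^2 := by
      intro k
      have h1 : ∀ j, ⟪z k i, w j⟫ ≤ Mf k i := by
        intro j
        refine aux_halfspace (z k i) ?_ (w j) (hKsub k (hwK j))
        rintro _ ⟨ℓ, rfl⟩
        exact hub k i ℓ
      have h2 : (Finset.univ.sup' hNE fun j => ⟪z k i, w j⟫) ≤ Mf k i :=
        Finset.sup'_le _ _ fun j _ => h1 j
      rw [hg_def]; simp only; linarith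
    obtain ⟨k₁, hk₁⟩ := hKapprox ρ hρ0
    have hBad : {k : ℕ | k₁ ≤ k ∧ δ ≤ infDist (z k i) S}.Finite := by
      by_contra hinf
      have hinf' : {k : ℕ | k₁ ≤ k ∧ δ ≤ infDist (z k i) S}.Infinite := hinf
      obtain ⟨Tb, hTbsub, hTbcard⟩ := hinf'.exists_subset_card_eq (Nat.ceil (R^2/(2*c)/η) + 1)
      have hTbne : Tb.Nonempty := by
        rw [← Finset.card_pos, hTbcard]; omega
      set N := Tb.max' hTbne + 1 with hN_def
      have hTbrange : Tb ⊆ Finset.range N := by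
        intro k hk
        rw [Finset.mem_range, hN_def]
        exact Nat.lt_succ_of_le (Tb.le_max' k hk)
      have hsum1 : ∑ k ∈ Tb, (Mf k i - ‖z k i‖^2) ≤ R^2/(2*c) :=
        le_trans (Finset.sum_le_sum_of_subset_of_nonneg hTbrange
          (fun k _ _ => hquad k i)) (hsum_e i N)
      have hsum2 : (Tb.card : ℝ) * η ≤ ∑ k ∈ Tb, (Mf k i - ‖z k i‖^2) := by
        rw [← nsmul_eq_mul]
        apply Finset.card_nsmul_le_sum
        intro k hk
        have hkBad := hTbsub hk
        exact le_trans (hF7 (z k i) (hk₁ k hkBad.1 i).le hkBad.2) (hge k)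
      rw [hTbcard] at hsum2
      have hceil := Nat.le_ceil (R^2/(2*c)/η)
      have h3 : R^2/(2*c) ≤ (Nat.ceil (R^2/(2*c)/η) : ℝ) * η := by
        have h4 := mul_le_mul_of_nonneg_right hceil hη0.le
        rwa [div_mul_cancel₀ _ (ne_of_gt hη0)] at h4
      have hexp : (((Nat.ceil (R^2/(2*c)/η) : ℕ) + 1 : ℕ) : ℝ) * η
          = (Nat.ceil (R^2/(2*c)/η) : ℝ) * η + η := by
        push_cast; ring
      rw [hexp] at hsum2
      linarith
    obtain ⟨k₂, hk₂a, hk₂b⟩ : ∃ k₂, k₁ ≤ k₂ ∧ ∀ k, k₂ ≤ k →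
        infDist (z k i) S < δ ∧ dist (z (k+1) i) (z k i) < δ := by
      obtain ⟨b0, hb0⟩ := hBad.bddAbove
      obtain ⟨N2, hN2⟩ := eventually_atTop.1 ((hsteptend i).eventually (gt_mem_nhds hδ0))
      refine ⟨max (b0+1) (max k₁ N2), le_trans (le_max_left _ _) (le_max_right _ _), ?_⟩
      intro k hk
      have hk1 : k₁ ≤ k := le_trans (le_trans (le_max_left _ _) (le_max_right _ _)) hk
      have hkN2 : N2 ≤ k := le_trans (le_trans (le_max_right _ _) (le_max_right _ _)) hk
      have hkb0 : b0 + 1 ≤ k := le_trans (le_max_left _ _) hk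
      constructor
      · by_contra hge'
        have hmemBad : k ∈ {k : ℕ | k₁ ≤ k ∧ δ ≤ infDist (z k i) S} := ⟨hk1, not_lt.1 hge'⟩
        have := hb0 hmemBad
        omega
      · rw [dist_eq_norm]
        exact hN2 k hkN2
    obtain ⟨s, hsS, hs_dist⟩ := (infDist_lt_iff hSne).1 (hk₂b k₂ le_rfl).1
    refine ⟨s, hsS, k₂, ?_⟩
    have key : ∀ k, k₂ ≤ k → dist (z k i) s < δ := by
      intro k hk
      induction k, hk using Nat.le_induction with
      | base => exact hs_dist
      | succ k hk ih =>
        obtain ⟨s', hs'S, hs'_dist⟩ := (infDist_lt_iff hSne).1 (hk₂b (k+1) (by omega)).1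
        have hss' : s' = s := by
          by_contra hne
          have h3δ := hδsep s' hs'S s hsS hne
          have htri : dist s' s ≤ dist s' (z (k+1) i) + dist (z (k+1) i) (z k i) + dist (z k i) s :=
            dist_triangle4 s' (z (k+1) i) (z k i) s
          have h1 : dist s' (z (k+1) i) < δ := by rw [dist_comm]; exact hs'_dist
          have h2 : dist (z (k+1) i) (z k i) < δ := (hk₂b k hk).2
          linarith
        rw [hss'] at hs'_dist
        exact hs'_dist
    intro k hk
    exact mem_closedBall.2 (key k hk).le

end
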